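/- For every real w > 0 and every natural number n, the following identity holds: Σ_{k=0}^{n} (−1)^k C(n,k) (1+w)^{k(n−k)} A_{n−k}(w) = [n = 0], i.e., the sum equals 1 if n = 0 and 0 if n ≥ 1, where A_j(w) = Σ_m D(j,m) w^m. (This is the coefficient-wise form of the identity DAG(z,w) = 1/Set(−z,w).) -/

import Mathlib

open Finset Relation
open scoped Classical

/-- A finite labelled digraph (edge set on `Fin n`) is acyclic if the transitive
closure of its edge relation is irreflexive. -/
def DAcyclic {n : ℕ} (E : Finset (Fin n × Fin n)) : Prop :=
  Irreflexive (Relation.TransGen fun a b => (a, b) ∈ E)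

/-- Sources of a digraph: vertices with no incoming edge. -/
def dagSources {n : ℕ} (E : Finset (Fin n × Fin n)) : Finset (Fin n) :=
  Finset.univ.filter fun v => ∀ u, (u, v) ∉ E

open Classical in
/-- `Dcount n m k` = number of labelled DAGs on `n` vertices with `m` edges and
exactly `k` sources. -/
noncomputable def Dcount (n m k : ℕ) : ℕ :=
  (Finset.univ.filter fun E : Finset (Fin n × Fin n) =>
    DAcyclic E ∧ E.card = m ∧ (dagSources E).card = k).card

open Classical in
/-- `DcountE n m` = number of labelled DAGs on `n` vertices with `m` edges. -/
noncomputable def DcountE (n m : ℕ) : ℕ :=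
  (Finset.univ.filter fun E : Finset (Fin n × Fin n) =>
    DAcyclic E ∧ E.card = m).card

/-! ### Auxiliary definitions and lemmas -/

/-- The edge-counting polynomial `A_j(w)` of labelled DAGs on `j` vertices. -/
noncomputable def Pw (w : ℝ) (j : ℕ) : ℝ :=
  ∑ E ∈ Finset.univ.filter (fun E : Finset (Fin j × Fin j) => DAcyclic E), w ^ E.card

lemma card_le_sq {j : ℕ} (E : Finset (Fin j × Fin j)) : E.card ≤ j * j := by
  have := Finset.card_le_univ E
  simpa [Fintype.card_prod] using this

lemma tsum_eq_Pw (w : ℝ) (j : ℕ) :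
    ∑' m : ℕ, (DcountE j m : ℝ) * w ^ m = Pw w j := by
  have hvan : ∀ m ∉ Finset.range (j * j + 1), (DcountE j m : ℝ) * w ^ m = 0 := by
    intro m hm
    have hm' : j * j < m := by simpa using Nat.lt_of_succ_le (Nat.not_lt.1 (by simpa using hm))
    have : DcountE j m = 0 := by
      rw [DcountE, Finset.card_eq_zero, Finset.filter_eq_empty_iff]
      rintro E - ⟨-, hcard⟩
      exact absurd (hcard ▸ card_le_sq E) (Nat.not_le.2 hm')
    simp [this]
  rw [tsum_eq_sum hvan]
  have key : ∀ m, (DcountE j m : ℝ) * w ^ m =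
      ∑ E ∈ (Finset.univ.filter fun E : Finset (Fin j × Fin j) => DAcyclic E).filter
        (fun E => E.card = m), w ^ E.card := by
    intro m
    rw [Finset.filter_filter]
    rw [Finset.sum_congr rfl (fun E hE => by rw [(Finset.mem_filter.1 hE).2.2] : _)]
    simp [DcountE, mul_comm]
  calc ∑ m ∈ Finset.range (j * j + 1), (DcountE j m : ℝ) * w ^ m
      = ∑ m ∈ Finset.range (j * j + 1),
          ∑ E ∈ (Finset.univ.filter fun E : Finset (Fin j × Fin j) => DAcyclic E).filter
            (fun E => E.card = m), w ^ E.card := Finset.sum_congr rfl fun m _ => key m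
    _ = Pw w j := Finset.sum_fiberwise_of_maps_to
        (fun E _ => Finset.mem_range.2 (Nat.lt_succ_of_le (card_le_sq E))) _

lemma transGen_map {α β : Type*} (f : α ↪ β) (E : Finset (α × α)) {a b : α}
    (h : Relation.TransGen (fun a b => (a, b) ∈ E) a b) :
    Relation.TransGen (fun a b => (a, b) ∈ E.map (f.prodMap f)) (f a) (f b) := by
  induction h with
  | single h => exact TransGen.single (Finset.mem_map_of_mem _ h)
  | tail _ h ih => exact ih.tail (Finset.mem_map_of_mem _ h)

lemma transGen_map_rev {α β : Type*} (f : α ↪ β) (E : Finset (α × α)) {a b : β}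
    (h : Relation.TransGen (fun a b => (a, b) ∈ E.map (f.prodMap f)) a b) :
    ∃ x y, a = f x ∧ b = f y ∧ Relation.TransGen (fun a b => (a, b) ∈ E) x y := by
  induction h with
  | single h =>
    obtain ⟨⟨x, y⟩, hxy, hef⟩ := Finset.mem_map.1 h
    exact ⟨x, y, congrArg Prod.fst hef.symm, congrArg Prod.snd hef.symm, TransGen.single hxy⟩
  | tail _ h ih =>
    obtain ⟨x, y, rfl, rfl, hxy⟩ := ih
    obtain ⟨⟨x', y'⟩, hxy', hef⟩ := Finset.mem_map.1 h
    have h1 : f x' = f y := congrArg Prod.fst hef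
    have h2 : (f.prodMap f (x', y')).2 = _ := congrArg Prod.snd hef
    exact ⟨x, y', rfl, h2.symm, hxy.tail (by rwa [f.injective h1] at hxy')⟩

lemma irrefl_map_iff {α β : Type*} (f : α ↪ β) (E : Finset (α × α)) :
    Irreflexive (Relation.TransGen fun a b => (a, b) ∈ E.map (f.prodMap f)) ↔
      Irreflexive (Relation.TransGen fun a b => (a, b) ∈ E) := by
  constructor
  · intro h a ha
    exact h (f a) (transGen_map f E ha)
  · intro h a ha
    obtain ⟨x, y, rfl, hy, hxy⟩ := transGen_map_rev f E ha
    exact h x (by rwa [← f.injective hy] at hxy)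

lemma relabel (w : ℝ) {n j : ℕ} (T : Finset (Fin n)) (h : T.card = j) :
    ∑ E ∈ ((T ×ˢ T).powerset.filter
        (fun E => Irreflexive (Relation.TransGen fun a b => (a, b) ∈ E))), w ^ E.card
      = Pw w j := by
  set f : Fin j ↪ Fin n := (T.orderEmbOfFin h).toEmbedding with hfdef
  have hrange' : Set.range (f : Fin j → Fin n) = ↑T := T.range_orderEmbOfFin h
  set g := f.prodMap f with hg
  have hsub : ∀ E ∈ (T ×ˢ T).powerset, ↑E ⊆ Set.range (g : Fin j × Fin j → Fin n × Fin n) := by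
    intro E hE p hp
    obtain ⟨ha, hb⟩ := Finset.mem_product.1 (Finset.mem_powerset.1 hE hp)
    obtain ⟨x, hx⟩ : p.1 ∈ Set.range (f : Fin j → Fin n) := by rw [hrange']; exact ha
    obtain ⟨y, hy⟩ : p.2 ∈ Set.range (f : Fin j → Fin n) := by rw [hrange']; exact hb
    exact ⟨(x, y), Prod.ext hx hy⟩
  have hmp : ∀ E ∈ (T ×ˢ T).powerset,
      (E.preimage g g.injective.injOn).map g = E := by
    intro E hE
    rw [Finset.map_eq_image, Finset.image_preimage]
    exact Finset.filter_true_of_mem fun p hp => hsub E hE hp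
  refine (Finset.sum_bij' (fun E _ => E.preimage g g.injective.injOn)
      (fun E' _ => E'.map g) ?_ ?_ ?_ ?_ ?_)
  · intro E hE
    obtain ⟨hEsub, hEir⟩ := Finset.mem_filter.1 hE
    simp only [Finset.mem_filter, Finset.mem_univ, true_and]
    show Irreflexive _
    rw [← irrefl_map_iff f, hmp E hEsub]
    exact hEir
  · intro E' hE'
    have hir := (Finset.mem_filter.1 hE').2
    refine Finset.mem_filter.2 ⟨Finset.mem_powerset.2 ?_, ?_⟩
    · intro p hp
      obtain ⟨⟨x, y⟩, hxy, rfl⟩ := Finset.mem_map.1 hp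
      exact Finset.mem_product.2 ⟨T.orderEmbOfFin_mem h x, T.orderEmbOfFin_mem h y⟩
    · exact (irrefl_map_iff f E').2 hir
  · intro E hE
    exact hmp E (Finset.mem_filter.1 hE).1
  · intro E' _
    exact Finset.preimage_map g E'
  · intro E hE
    have h2 : #(E.preimage (g : Fin j × Fin j → Fin n × Fin n) g.injective.injOn) = #E := by
      conv_rhs => rw [← hmp E (Finset.mem_filter.1 hE).1]
      rw [Finset.card_map]
    simp only [h2]

lemma sourcesSub {n : ℕ} (E : Finset (Fin n × Fin n)) (S : Finset (Fin n)) :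
    S ⊆ dagSources E ↔ ∀ p ∈ E, p.2 ∉ S := by
  constructor
  · intro hS p hp hp2
    have := Finset.mem_filter.1 (hS hp2)
    exact this.2 p.1 (by simpa using hp)
  · intro h v hv
    refine Finset.mem_filter.2 ⟨Finset.mem_univ _, fun u hu => h (u, v) hu hv⟩

lemma transGen_target {n : ℕ} {E : Finset (Fin n × Fin n)} {S : Finset (Fin n)}
    (hend : ∀ p ∈ E, p.2 ∉ S) {a b : Fin n}
    (h : Relation.TransGen (fun a b => (a, b) ∈ E) a b) : b ∉ S := by
  induction h with
  | single h => exact hend _ h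
  | tail _ h _ => exact hend _ h

lemma transGen_sub {n : ℕ} {E : Finset (Fin n × Fin n)} {S : Finset (Fin n)}
    (hend : ∀ p ∈ E, p.2 ∉ S) {a b : Fin n}
    (h : Relation.TransGen (fun a b => (a, b) ∈ E) a b) (ha : a ∉ S) :
    Relation.TransGen (fun a b => (a, b) ∈ E.filter fun p => p.1 ∉ S) a b := by
  induction h with
  | single h => exact TransGen.single (Finset.mem_filter.2 ⟨h, ha⟩)
  | tail hab h ih =>
    exact (ih).tail (Finset.mem_filter.2 ⟨h, transGen_target hend hab⟩)

lemma acy_iff_sub {n : ℕ} (E : Finset (Fin n × Fin n)) (S : Finset (Fin n))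
    (hend : ∀ p ∈ E, p.2 ∉ S) :
    DAcyclic E ↔
      Irreflexive (Relation.TransGen fun a b => (a, b) ∈ E.filter fun p => p.1 ∉ S) := by
  constructor
  · intro h a ha
    exact h a (TransGen.mono (fun x y hxy => (Finset.mem_filter.1 hxy).1) _ _ ha)
  · intro h a ha
    exact h a (transGen_sub hend ha (transGen_target hend ha))

lemma sum_powerset_pow {γ : Type*} [DecidableEq γ] (w : ℝ) (s : Finset γ) :
    ∑ t ∈ s.powerset, w ^ t.card = (1 + w) ^ s.card := by
  have h := Finset.prod_add (fun _ : γ => w) (fun _ => (1 : ℝ)) s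
  simp only [Finset.prod_const, one_pow, mul_one] at h
  rw [add_comm w 1] at h
  exact h.symm

lemma split (w : ℝ) {n : ℕ} (S : Finset (Fin n)) :
    ∑ E ∈ (Finset.univ.filter (fun E : Finset (Fin n × Fin n) =>
        DAcyclic E ∧ S ⊆ dagSources E)), w ^ E.card
      = (1 + w) ^ (S.card * Sᶜ.card) *
        ∑ E ∈ ((Sᶜ ×ˢ Sᶜ).powerset.filter
          (fun E => Irreflexive (Relation.TransGen fun a b => (a, b) ∈ E))), w ^ E.card := by
  classical
  set X := (S ×ˢ Sᶜ).powerset with hX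
  set Y := (Sᶜ ×ˢ Sᶜ).powerset.filter
      (fun E : Finset (Fin n × Fin n) =>
        Irreflexive (Relation.TransGen fun a b => (a, b) ∈ E)) with hY
  have main : ∑ E ∈ (Finset.univ.filter (fun E : Finset (Fin n × Fin n) =>
        DAcyclic E ∧ S ⊆ dagSources E)), w ^ E.card
      = ∑ p ∈ X ×ˢ Y, w ^ p.1.card * w ^ p.2.card := by
    refine Finset.sum_bij'
      (fun E _ => (E.filter fun p => p.1 ∈ S, E.filter fun p => p.1 ∉ S))
      (fun p _ => p.1 ∪ p.2) ?_ ?_ ?_ ?_ ?_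
    · intro E hE
      obtain ⟨hacy, hsrc⟩ := (Finset.mem_filter.1 hE).2
      have hend := (sourcesSub E S).1 hsrc
      refine Finset.mem_product.2 ⟨Finset.mem_powerset.2 ?_, Finset.mem_filter.2
        ⟨Finset.mem_powerset.2 ?_, ?_⟩⟩
      · intro p hp
        obtain ⟨hpE, hp1⟩ := Finset.mem_filter.1 hp
        exact Finset.mem_product.2 ⟨hp1, Finset.mem_compl.2 (hend p hpE)⟩
      · intro p hp
        obtain ⟨hpE, hp1⟩ := Finset.mem_filter.1 hp
        exact Finset.mem_product.2 ⟨Finset.mem_compl.2 hp1, Finset.mem_compl.2 (hend p hpE)⟩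
      · exact (acy_iff_sub E S hend).1 hacy
    · intro p hp
      obtain ⟨hp1, hp2⟩ := Finset.mem_product.1 hp
      have hp1' := Finset.mem_powerset.1 hp1
      obtain ⟨hp2', hirr⟩ := Finset.mem_filter.1 hp2
      have hp2'' := Finset.mem_powerset.1 hp2'
      have hend : ∀ q ∈ p.1 ∪ p.2, q.2 ∉ S := by
        intro q hq
        rcases Finset.mem_union.1 hq with h | h
        · exact Finset.mem_compl.1 (Finset.mem_product.1 (hp1' h)).2
        · exact Finset.mem_compl.1 (Finset.mem_product.1 (hp2'' h)).2
      have hfilt : (p.1 ∪ p.2).filter (fun q => q.1 ∉ S) = p.2 := by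
        rw [Finset.filter_union]
        have h1 : p.1.filter (fun q => q.1 ∉ S) = ∅ := by
          rw [Finset.filter_eq_empty_iff]
          intro q hq
          simpa using (Finset.mem_product.1 (hp1' hq)).1
        have h2 : p.2.filter (fun q => q.1 ∉ S) = p.2 :=
          Finset.filter_true_of_mem fun q hq =>
            Finset.mem_compl.1 (Finset.mem_product.1 (hp2'' hq)).1
        rw [h1, h2, Finset.empty_union]
      simp only [Finset.mem_filter, Finset.mem_univ, true_and]
      refine ⟨?_, (sourcesSub _ S).2 hend⟩
      rw [acy_iff_sub _ S hend, hfilt]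
      exact hirr
    · intro E hE
      simpa using Finset.filter_union_filter_not_eq (fun p => p.1 ∈ S) E
    · intro p hp
      obtain ⟨hp1, hp2⟩ := Finset.mem_product.1 hp
      have hp1' := Finset.mem_powerset.1 hp1
      have hp2'' := Finset.mem_powerset.1 (Finset.mem_filter.1 hp2).1
      have h1 : (p.1 ∪ p.2).filter (fun q => q.1 ∈ S) = p.1 := by
        rw [Finset.filter_union]
        have ha : p.1.filter (fun q => q.1 ∈ S) = p.1 :=
          Finset.filter_true_of_mem fun q hq => (Finset.mem_product.1 (hp1' hq)).1
        have hb : p.2.filter (fun q => q.1 ∈ S) = ∅ := by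
          rw [Finset.filter_eq_empty_iff]
          intro q hq
          exact Finset.mem_compl.1 (Finset.mem_product.1 (hp2'' hq)).1
        rw [ha, hb, Finset.union_empty]
      have h2 : (p.1 ∪ p.2).filter (fun q => ¬ q.1 ∈ S) = p.2 := by
        rw [Finset.filter_union]
        have ha : p.1.filter (fun q => ¬ q.1 ∈ S) = ∅ := by
          rw [Finset.filter_eq_empty_iff]
          intro q hq
          simpa using (Finset.mem_product.1 (hp1' hq)).1
        have hb : p.2.filter (fun q => ¬ q.1 ∈ S) = p.2 :=
          Finset.filter_true_of_mem fun q hq =>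
            Finset.mem_compl.1 (Finset.mem_product.1 (hp2'' hq)).1
        rw [ha, hb, Finset.empty_union]
      exact Prod.ext h1 h2
    · intro E hE
      have hcard : E.card = (E.filter fun p => p.1 ∈ S).card +
          (E.filter fun p => p.1 ∉ S).card :=
        (Finset.card_filter_add_card_filter_not (s := E) (fun p : Fin n × Fin n => p.1 ∈ S)).symm
      rw [hcard, pow_add]
  rw [main, Finset.sum_product]
  rw [← Finset.sum_mul_sum X Y (fun x => w ^ x.card) (fun y => w ^ y.card)]
  congr 1
  rw [hX, sum_powerset_pow, Finset.card_product]

lemma sources_nonempty {n : ℕ} (hn : 0 < n) (E : Finset (Fin n × Fin n)) (hE : DAcyclic E) :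
    (dagSources E).Nonempty := by
  have : IsTrans (Fin n) (Relation.TransGen fun a b => (a, b) ∈ E) := ⟨fun _ _ _ => TransGen.trans⟩
  have : IsIrrefl (Fin n) (Relation.TransGen fun a b => (a, b) ∈ E) := ⟨hE⟩
  obtain ⟨v, -, hv⟩ := (Finite.wellFounded_of_trans_of_irrefl
    (Relation.TransGen fun a b => (a, b) ∈ E)).has_min Set.univ
    ⟨⟨0, hn⟩, trivial⟩
  refine ⟨v, ?_⟩
  simp only [dagSources, Finset.mem_filter, Finset.mem_univ, true_and]
  exact fun u hu => hv u trivial (TransGen.single hu)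

theorem main_identity (w : ℝ) (n : ℕ) :
    ∑ k ∈ Finset.range (n + 1),
        (-1 : ℝ) ^ k * (n.choose k) * (1 + w) ^ (k * (n - k)) * Pw w (n - k)
      = if n = 0 then 1 else 0 := by
  classical
  have hstep : ∀ S : Finset (Fin n),
      (1 + w) ^ (S.card * (n - S.card)) * Pw w (n - S.card)
        = ∑ E ∈ (Finset.univ.filter (fun E : Finset (Fin n × Fin n) =>
            DAcyclic E ∧ S ⊆ dagSources E)), w ^ E.card := by
    intro S
    have hc : Sᶜ.card = n - S.card := by
      rw [Finset.card_compl, Fintype.card_fin]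
    rw [split w S, hc, relabel w Sᶜ hc]
  have h1 : ∀ k ∈ Finset.range (n + 1),
      (-1 : ℝ) ^ k * (n.choose k) * (1 + w) ^ (k * (n - k)) * Pw w (n - k)
        = ∑ S ∈ Finset.powersetCard k (Finset.univ : Finset (Fin n)),
            (-1 : ℝ) ^ S.card * ∑ E ∈ (Finset.univ.filter
              (fun E : Finset (Fin n × Fin n) => DAcyclic E ∧ S ⊆ dagSources E)), w ^ E.card := by
    intro k hk
    rw [Finset.sum_congr rfl (fun S hS => by
      rw [(Finset.mem_powersetCard.1 hS).2, ← hstep S, (Finset.mem_powersetCard.1 hS).2] : _)]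
    rw [Finset.sum_const, Finset.card_powersetCard, Finset.card_univ, Fintype.card_fin,
      nsmul_eq_mul]
    ring
  rw [Finset.sum_congr rfl h1]
  rw [show n + 1 = (Finset.univ : Finset (Fin n)).card + 1 by
    rw [Finset.card_univ, Fintype.card_fin]]
  rw [← Finset.sum_powerset (Finset.univ : Finset (Fin n))
      (fun S => (-1 : ℝ) ^ S.card * ∑ E ∈ (Finset.univ.filter
        (fun E : Finset (Fin n × Fin n) => DAcyclic E ∧ S ⊆ dagSources E)), w ^ E.card)]
  have h3 : ∀ S : Finset (Fin n),
      (Finset.univ.filter (fun E : Finset (Fin n × Fin n) => DAcyclic E ∧ S ⊆ dagSources E))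
        = (Finset.univ.filter (fun E : Finset (Fin n × Fin n) => DAcyclic E)).filter
            (fun E => S ⊆ dagSources E) := by
    intro S; rw [Finset.filter_filter]
  calc ∑ S ∈ (Finset.univ : Finset (Fin n)).powerset,
        (-1 : ℝ) ^ S.card * ∑ E ∈ (Finset.univ.filter
          (fun E : Finset (Fin n × Fin n) => DAcyclic E ∧ S ⊆ dagSources E)), w ^ E.card
      = ∑ S ∈ (Finset.univ : Finset (Fin n)).powerset,
          ∑ E ∈ (Finset.univ.filter (fun E : Finset (Fin n × Fin n) => DAcyclic E)),
            (if S ⊆ dagSources E then (-1 : ℝ) ^ S.card * w ^ E.card else 0) := by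
        refine Finset.sum_congr rfl fun S _ => ?_
        rw [h3, Finset.mul_sum, Finset.sum_filter]
    _ = ∑ E ∈ (Finset.univ.filter (fun E : Finset (Fin n × Fin n) => DAcyclic E)),
          ∑ S ∈ (Finset.univ : Finset (Fin n)).powerset,
            (if S ⊆ dagSources E then (-1 : ℝ) ^ S.card * w ^ E.card else 0) :=
        Finset.sum_comm
    _ = ∑ E ∈ (Finset.univ.filter (fun E : Finset (Fin n × Fin n) => DAcyclic E)),
          (if dagSources E = ∅ then (1 : ℝ) else 0) * w ^ E.card := by
        refine Finset.sum_congr rfl fun E _ => ?_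
        rw [← Finset.sum_filter]
        have : (Finset.univ : Finset (Fin n)).powerset.filter (fun S => S ⊆ dagSources E)
            = (dagSources E).powerset := by
          ext S
          simp [Finset.mem_powerset]
        rw [this]
        have hsign : ∑ S ∈ (dagSources E).powerset, ((-1 : ℝ) ^ S.card * w ^ E.card)
            = (if dagSources E = ∅ then (1 : ℝ) else 0) * w ^ E.card := by
          rw [← Finset.sum_mul]
          congr 1
          have := Finset.sum_powerset_neg_one_pow_card (x := dagSources E)
          have hcast : ((∑ m ∈ (dagSources E).powerset, (-1 : ℤ) ^ m.card : ℤ) : ℝ)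
              = ∑ m ∈ (dagSources E).powerset, (-1 : ℝ) ^ m.card := by push_cast; rfl
          rw [← hcast, this]
          split <;> norm_num
        exact hsign
    _ = if n = 0 then 1 else 0 := by
        rcases Nat.eq_zero_or_pos n with hn | hn
        · subst hn
          simp only [if_pos rfl]
          have hE : ∀ E : Finset (Fin 0 × Fin 0), E = ∅ := fun E =>
            Finset.eq_empty_of_isEmpty E
          have hA : DAcyclic (∅ : Finset (Fin 0 × Fin 0)) := by
            intro a; exact a.elim0
          have hfil : (Finset.univ.filter (fun E : Finset (Fin 0 × Fin 0) => DAcyclic E))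
              = {∅} := by
            ext E
            simp [hE E, hA, eq_iff_true_of_subsingleton]
          rw [hfil]
          simp [dagSources]
        · rw [if_neg (Nat.pos_iff_ne_zero.1 hn)]
          refine Finset.sum_eq_zero fun E hE => ?_
          have hacy := (Finset.mem_filter.1 hE).2
          have hne := sources_nonempty hn E hacy
          rw [if_neg (Finset.nonempty_iff_ne_empty.1 hne), zero_mul]

/-- Coefficient-wise form of $\mathrm{DAG}(z,w) = 1/\mathrm{Set}(-z,w)$:
$\sum_{k=0}^n (-1)^k \binom nk (1+w)^{k(n-k)} A_{n-k}(w) = [n = 0]$,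
where $A_j(w) = \sum_m D(j,m) w^m$. -/
theorem dag_inverse_identity (w : ℝ) (hw : 0 < w) (n : ℕ) :
    ∑ k ∈ Finset.range (n + 1),
        (-1 : ℝ) ^ k * (n.choose k) * (1 + w) ^ (k * (n - k))
          * ∑' m : ℕ, (DcountE (n - k) m : ℝ) * w ^ m
      = if n = 0 then 1 else 0 := by
  have h : ∀ k ∈ Finset.range (n + 1),
      (-1 : ℝ) ^ k * (n.choose k) * (1 + w) ^ (k * (n - k))
          * ∑' m : ℕ, (DcountE (n - k) m : ℝ) * w ^ m
        = (-1 : ℝ) ^ k * (n.choose k) * (1 + w) ^ (k * (n - k)) * Pw w (n - k) :=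
    fun k _ => by rw [tsum_eq_Pw]
  rw [Finset.sum_congr rfl h]
  exact main_identity w n
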